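/- The measure μ_G on G = (-1,1) with density 1/(1-x²) relative to Lebesgue measure is invariant under the group translations: for every a ∈ (-1,1) and every integrable f : (-1,1) → ℂ, ∫_G f(a +_G x) dμ_G(x) = ∫_G f(x) dμ_G(x), where a +_G x = (a+x)/(1+ax). That is, μ_G is a Haar measure on (G, +_G). -/

import Mathlib

open MeasureTheory

/-- The measure dμ_G = dx/(1-x²) on G = (-1,1). -/
noncomputable def muG : Measure ℝ :=
  (volume.restrict (Set.Ioo (-1 : ℝ) 1)).withDensity
    (fun x => ENNReal.ofReal (1 / (1 - x ^ 2)))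

lemma muG_integral_eq (g : ℝ → ℂ) :
    ∫ x, g x ∂muG = ∫ x in Set.Ioo (-1 : ℝ) 1, (1 / (1 - x ^ 2)) • g x := by
  have hd : Measurable (fun x : ℝ => (1 / (1 - x ^ 2)).toNNReal) := by
    measurability
  rw [muG, show (fun x : ℝ => ENNReal.ofReal (1 / (1 - x ^ 2)))
      = (fun x : ℝ => ((1 / (1 - x ^ 2)).toNNReal : ENNReal)) from rfl,
    integral_withDensity_eq_integral_smul hd]
  refine setIntegral_congr_fun measurableSet_Ioo (fun x hx => ?_)
  have hpos : (0:ℝ) < 1 - x ^ 2 := by nlinarith [hx.1, hx.2]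
  rw [NNReal.smul_def, Real.coe_toNNReal _ (le_of_lt (by positivity))]

/-- μ_G is invariant under group translations x ↦ a +_G x, i.e. it is a Haar
measure on (G, +_G). -/
theorem stmt_12 (a : ℝ) (ha : a ∈ Set.Ioo (-1 : ℝ) 1)
    (f : ℝ → ℂ) (hf : Integrable f muG) :
    ∫ x, f ((a + x) / (1 + a * x)) ∂muG = ∫ x, f x ∂muG := by
  obtain ⟨ha1, ha2⟩ := ha
  set φ : ℝ → ℝ := fun x => (a + x) / (1 + a * x) with hφ
  set φ' : ℝ → ℝ := fun x => (1 - a ^ 2) / (1 + a * x) ^ 2 with hφ'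
  have hden : ∀ x ∈ Set.Ioo (-1:ℝ) 1, (0:ℝ) < 1 + a * x := by
    intro x hx; nlinarith [hx.1, hx.2]
  have hmaps : ∀ x ∈ Set.Ioo (-1:ℝ) 1, φ x ∈ Set.Ioo (-1:ℝ) 1 := by
    intro x hx
    have h0 := hden x hx
    constructor
    · rw [hφ, lt_div_iff₀ h0]; nlinarith [hx.1, hx.2]
    · rw [hφ, div_lt_iff₀ h0]; nlinarith [hx.1, hx.2]
  have himg : φ '' Set.Ioo (-1:ℝ) 1 = Set.Ioo (-1:ℝ) 1 := by
    apply Set.Subset.antisymm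
    · rintro y ⟨x, hx, rfl⟩; exact hmaps x hx
    · intro y hy
      have hy0 : (0:ℝ) < 1 - a * y := by nlinarith [hy.1, hy.2]
      refine ⟨(y - a) / (1 - a * y), ?_, ?_⟩
      · constructor
        · rw [lt_div_iff₀ hy0]; nlinarith [hy.1, hy.2]
        · rw [div_lt_iff₀ hy0]; nlinarith [hy.1, hy.2]
      · have hne : (1:ℝ) - a ^ 2 ≠ 0 := by nlinarith
        have hn : a + (y - a) / (1 - a * y) = y * (1 - a ^ 2) / (1 - a * y) := by
          field_simp; ring
        have hd2 : 1 + a * ((y - a) / (1 - a * y)) = (1 - a ^ 2) / (1 - a * y) := by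
          field_simp; ring
        rw [hφ]
        simp only
        rw [hn, hd2, div_div_div_cancel_right₀, mul_div_assoc, div_self hne, mul_one]
        exact ne_of_gt hy0
  have hinj : Set.InjOn φ (Set.Ioo (-1:ℝ) 1) := by
    have : ∀ x ∈ Set.Ioo (-1:ℝ) 1, (φ x - a) / (1 - a * φ x) = x := by
      intro x hx
      have h0 := hden x hx
      have ha2' : (0:ℝ) < 1 - a ^ 2 := by nlinarith
      rw [hφ]
      rw [div_eq_iff]
      · field_simp; ring
      · have : 1 - a * ((a + x) / (1 + a * x)) = (1 - a ^ 2) / (1 + a * x) := by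
          field_simp; ring
        rw [this]; positivity
    intro x hx y hy hxy
    rw [← this x hx, ← this y hy, hxy]
  have hderiv : ∀ x ∈ Set.Ioo (-1:ℝ) 1,
      HasDerivWithinAt φ (φ' x) (Set.Ioo (-1:ℝ) 1) x := by
    intro x hx
    have h0 := hden x hx
    have : HasDerivAt φ (φ' x) x := by
      have h1 : HasDerivAt (fun x : ℝ => a + x) 1 x := by
        simpa using (hasDerivAt_id x).const_add a
      have h2 : HasDerivAt (fun x : ℝ => 1 + a * x) a x := by
        simpa using ((hasDerivAt_id x).const_mul a).const_add 1
      have := h1.div h2 (ne_of_gt h0)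
      refine this.congr_deriv ?_
      rw [hφ']; field_simp; ring
    exact this.hasDerivWithinAt
  rw [muG_integral_eq, muG_integral_eq]
  have hcv := integral_image_eq_integral_abs_deriv_smul measurableSet_Ioo
    hderiv hinj (fun y => (1 / (1 - y ^ 2)) • f y)
  rw [himg] at hcv
  rw [hcv]
  refine setIntegral_congr_fun measurableSet_Ioo (fun x hx => ?_)
  show (1 / (1 - x ^ 2)) • f (φ x) = |φ' x| • (1 / (1 - φ x ^ 2)) • f (φ x)
  have h0 := hden x hx
  have hx2 : (0:ℝ) < 1 - x ^ 2 := by nlinarith [hx.1, hx.2]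
  have ha2' : (0:ℝ) < 1 - a ^ 2 := by nlinarith
  have hphi2 : 1 - (φ x) ^ 2 = (1 - a ^ 2) * (1 - x ^ 2) / (1 + a * x) ^ 2 := by
    rw [hφ]; field_simp; ring
  have habs : |φ' x| = (1 - a ^ 2) / (1 + a * x) ^ 2 := by
    rw [hφ', abs_of_pos]; positivity
  rw [smul_smul, habs, hphi2]
  congr 1
  push_cast
  field_simp
  rw [div_self (by rw [mul_comm]; exact ne_of_gt h0)]
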